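/- arXiv:1608.03050 — 5 statements merged into one kernel-verified Lean document; each statement's English description precedes it below -/
import Mathlib

section
/- Let (M,g) be an m-dimensional Riemannian manifold satisfying conditions H₁ and H₂, i.e. ρ_{ij} = Λ₁ g_{ij} and 𝔖(R_{aijb}R_{bkla}) = Λ₂ 𝔖(g_{ij}g_{kl}) for constants Λ₁, Λ₂, where 𝔖 denotes the sum over all permutations of free indices. Then Λ₂ = (1/(2m(m+2)))(2τ²/m + 3|R|²), where |R|² = R_{abcd}R_{abcd}. -/
open scoped BigOperators

/-- Kronecker delta (the metric in a local orthonormal frame). -/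
def kd {m : ℕ} (i j : Fin m) : ℝ := if i = j then 1 else 0

/-- The pointwise curvature data (the Riemann curvature tensor together with its
first and second covariant derivatives, expressed in a local orthonormal frame)
of an `m`-dimensional Riemannian manifold `M`, subject to the standard
symmetries, the first and second Bianchi identities and the Ricci commutation
identity.  The sign convention is `R(X,Y)Z = [∇_X,∇_Y]Z − ∇_{[X,Y]}Z`. -/
structure RiemannModel (m : ℕ) (M : Type) where
  R : M → Fin m → Fin m → Fin m → Fin m → ℝ
  dR : M → Fin m → Fin m → Fin m → Fin m → Fin m → ℝ
  d2R : M → Fin m → Fin m → Fin m → Fin m → Fin m → Fin m → ℝ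
  R_antisymm₁ : ∀ p a b c d, R p b a c d = - R p a b c d
  R_antisymm₂ : ∀ p a b c d, R p a b d c = - R p a b c d
  R_pairSymm : ∀ p a b c d, R p c d a b = R p a b c d
  R_bianchi₁ : ∀ p a b c d, R p a b c d + R p b c a d + R p c a b d = 0
  dR_antisymm₁ : ∀ p a b c d e, dR p b a c d e = - dR p a b c d e
  dR_antisymm₂ : ∀ p a b c d e, dR p a b d c e = - dR p a b c d e
  dR_pairSymm : ∀ p a b c d e, dR p c d a b e = dR p a b c d e
  dR_bianchi₁ : ∀ p a b c d e, dR p a b c d e + dR p b c a d e + dR p c a b d e = 0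
  bianchi₂ : ∀ p a b c d e, dR p a b c d e + dR p a b d e c + dR p a b e c d = 0
  d2R_antisymm₁ : ∀ p a b c d e f, d2R p b a c d e f = - d2R p a b c d e f
  d2R_antisymm₂ : ∀ p a b c d e f, d2R p a b d c e f = - d2R p a b c d e f
  d2R_pairSymm : ∀ p a b c d e f, d2R p c d a b e f = d2R p a b c d e f
  d2R_bianchi₂ : ∀ p a b c d e f,
    d2R p a b c d e f + d2R p a b d e c f + d2R p a b e c d f = 0
  ricci_comm : ∀ p a b c d e f,
    d2R p a b c d e f - d2R p a b c d f e =
      ∑ u, (R p e f a u * R p u b c d + R p e f b u * R p a u c d +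
            R p e f c u * R p a b u d + R p e f d u * R p a b c u)

namespace RiemannModel

variable {m : ℕ} {M : Type} (V : RiemannModel m M)

/-- Ricci tensor `ρ_{ij} = R_{aija}`. -/
def ric (p : M) (i j : Fin m) : ℝ := ∑ a, V.R p a i j a

/-- Scalar curvature `τ`. -/
def scal (p : M) : ℝ := ∑ i, V.ric p i i

/-- `|R|² = R_{abcd}R_{abcd}`. -/
def normR2 (p : M) : ℝ := ∑ a, ∑ b, ∑ c, ∑ d, (V.R p a b c d) ^ 2

/-- `|ρ|² = ρ_{ab}ρ_{ab}`. -/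
def normRic2 (p : M) : ℝ := ∑ a, ∑ b, (V.ric p a b) ^ 2

/-- `|∇R|² = R_{abcd;e}R_{abcd;e}`. -/
def normDR2 (p : M) : ℝ := ∑ a, ∑ b, ∑ c, ∑ d, ∑ e, (V.dR p a b c d e) ^ 2

/-- `R_{iabc}R_{jabc}`. -/
def RR2 (p : M) (i j : Fin m) : ℝ := ∑ a, ∑ b, ∑ c, V.R p i a b c * V.R p j a b c

/-- `R̂ = R_{abcd}R_{abuv}R_{cduv}`. -/
def Rhat (p : M) : ℝ :=
  ∑ a, ∑ b, ∑ c, ∑ d, ∑ u, ∑ v, V.R p a b c d * V.R p a b u v * V.R p c d u v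

/-- `R̊ = R_{abcd}R_{aucv}R_{budv}`. -/
def Rring (p : M) : ℝ :=
  ∑ a, ∑ b, ∑ c, ∑ d, ∑ u, ∑ v, V.R p a b c d * V.R p a u c v * V.R p b u d v

/-- `R̂_{ij} = R_{ibac}R_{jbuv}R_{acuv}`. -/
def RhatT (p : M) (i j : Fin m) : ℝ :=
  ∑ a, ∑ b, ∑ c, ∑ u, ∑ v, V.R p i b a c * V.R p j b u v * V.R p a c u v

/-- `R̊_{ij} = R_{iabc}R_{jubv}R_{aucv}`. -/
def RringT (p : M) (i j : Fin m) : ℝ :=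
  ∑ a, ∑ b, ∑ c, ∑ u, ∑ v, V.R p i a b c * V.R p j u b v * V.R p a u c v

/-- `Ř_{ij} = R_{iuvj}R_{abcu}R_{abcv}`. -/
def RcheckT (p : M) (i j : Fin m) : ℝ :=
  ∑ u, ∑ v, ∑ a, ∑ b, ∑ c, V.R p i u v j * V.R p a b c u * V.R p a b c v

/-- `A_{ij} = R_{abcd;i}R_{abcd;j}`. -/
def At (p : M) (i j : Fin m) : ℝ :=
  ∑ a, ∑ b, ∑ c, ∑ d, V.dR p a b c d i * V.dR p a b c d j

/-- `B_{ij} = R_{ibcd;a}R_{jbcd;a}`. -/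
def Bt (p : M) (i j : Fin m) : ℝ :=
  ∑ a, ∑ b, ∑ c, ∑ d, V.dR p i b c d a * V.dR p j b c d a

/-- Second covariant derivative of the Ricci tensor, `ρ_{ij;ab}`. -/
def ric2 (p : M) (i j a b : Fin m) : ℝ := ∑ u, V.d2R p u i j u a b

/-- `Q_{ijkl} = R_{aijb}R_{bkla}`. -/
def Q (p : M) (i j k l : Fin m) : ℝ := ∑ a, ∑ b, V.R p a i j b * V.R p b k l a

/-- The integrand of condition `H₃`:
`32 R_{aijb}R_{bklc}R_{cuva} − 9 R_{aijb;k}R_{buva;l}`. -/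
def C (p : M) (i j k l u v : Fin m) : ℝ :=
  32 * (∑ a, ∑ b, ∑ c, V.R p a i j b * V.R p b k l c * V.R p c u v a)
    - 9 * (∑ a, ∑ b, V.dR p a i j b k * V.dR p b u v a l)

/-- `𝔖(g_{ij}g_{kl})` : symmetrization over all permutations of `i,j,k,l`. -/
def symG2 {m : ℕ} (i j k l : Fin m) : ℝ :=
  ∑ σ : Equiv.Perm (Fin 4),
    kd (![i,j,k,l] (σ 0)) (![i,j,k,l] (σ 1)) *
      kd (![i,j,k,l] (σ 2)) (![i,j,k,l] (σ 3))

/-- `𝔖(R_{aijb}R_{bkla})` : symmetrization over all permutations of `i,j,k,l`. -/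
def symQ (p : M) (i j k l : Fin m) : ℝ :=
  ∑ σ : Equiv.Perm (Fin 4),
    V.Q p (![i,j,k,l] (σ 0)) (![i,j,k,l] (σ 1)) (![i,j,k,l] (σ 2)) (![i,j,k,l] (σ 3))

/-- `𝔖(g_{ij}g_{kl}g_{uv})`. -/
def symG3 {m : ℕ} (i j k l u v : Fin m) : ℝ :=
  ∑ σ : Equiv.Perm (Fin 6),
    kd (![i,j,k,l,u,v] (σ 0)) (![i,j,k,l,u,v] (σ 1)) *
      kd (![i,j,k,l,u,v] (σ 2)) (![i,j,k,l,u,v] (σ 3)) *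
        kd (![i,j,k,l,u,v] (σ 4)) (![i,j,k,l,u,v] (σ 5))

/-- `𝔖(32R_{aijb}R_{bklc}R_{cuva} − 9R_{aijb;k}R_{buva;l})`. -/
def symC (p : M) (i j k l u v : Fin m) : ℝ :=
  ∑ σ : Equiv.Perm (Fin 6),
    V.C p (![i,j,k,l,u,v] (σ 0)) (![i,j,k,l,u,v] (σ 1)) (![i,j,k,l,u,v] (σ 2))
      (![i,j,k,l,u,v] (σ 3)) (![i,j,k,l,u,v] (σ 4)) (![i,j,k,l,u,v] (σ 5))

/-- Ledger's condition `H₁`. -/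
def H1 : Prop := ∃ Λ : ℝ, ∀ p i j, V.ric p i j = Λ * kd i j

/-- Ledger's condition `H₂`. -/
def H2 : Prop := ∃ Λ : ℝ, ∀ p i j k l, V.symQ p i j k l = Λ * symG2 i j k l

/-- Ledger's condition `H₃`. -/
def H3 : Prop :=
  ∃ Λ : ℝ, ∀ p i j k l u v, V.symC p i j k l u v = Λ * symG3 i j k l u v

/-- The Einstein condition `ρ_{ij} = (τ/m) g_{ij}`. -/
def einstein : Prop := ∀ p i j, V.ric p i j = V.scal p / m * kd i j

end RiemannModel

section helpers
variable {m : ℕ}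

lemma sum_perm_four (G : Fin 4 → Fin 4 → Fin 4 → Fin 4 → ℝ) :
    ∑ σ : Equiv.Perm (Fin 4), G (σ 0) (σ 1) (σ 2) (σ 3) =
      G 0 1 2 3 + G 0 1 3 2 + G 0 2 1 3 + G 0 2 3 1 + G 0 3 1 2 + G 0 3 2 1 +
      G 1 0 2 3 + G 1 0 3 2 + G 1 2 0 3 + G 1 2 3 0 + G 1 3 0 2 + G 1 3 2 0 +
      G 2 0 1 3 + G 2 0 3 1 + G 2 1 0 3 + G 2 1 3 0 + G 2 3 0 1 + G 2 3 1 0 +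
      G 3 0 1 2 + G 3 0 2 1 + G 3 1 0 2 + G 3 1 2 0 + G 3 2 0 1 + G 3 2 1 0 := by
  have hinj : ∀ σ ∈ (Finset.univ : Finset (Equiv.Perm (Fin 4))), ∀ τ ∈ Finset.univ,
      (fun σ : Equiv.Perm (Fin 4) => (σ 0, σ 1, σ 2, σ 3)) σ =
      (fun σ : Equiv.Perm (Fin 4) => (σ 0, σ 1, σ 2, σ 3)) τ → σ = τ := by
    intro σ _ τ _ h
    simp only [Prod.mk.injEq] at h
    ext x
    fin_cases x <;> simp [h.1, h.2.1, h.2.2.1, h.2.2.2]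
  have himg : (Finset.univ : Finset (Equiv.Perm (Fin 4))).image
      (fun σ => (σ 0, σ 1, σ 2, σ 3)) =
      ({(0,1,2,3), (0,1,3,2), (0,2,1,3), (0,2,3,1), (0,3,1,2), (0,3,2,1),
        (1,0,2,3), (1,0,3,2), (1,2,0,3), (1,2,3,0), (1,3,0,2), (1,3,2,0),
        (2,0,1,3), (2,0,3,1), (2,1,0,3), (2,1,3,0), (2,3,0,1), (2,3,1,0),
        (3,0,1,2), (3,0,2,1), (3,1,0,2), (3,1,2,0), (3,2,0,1), (3,2,1,0)} :
        Finset (Fin 4 × Fin 4 × Fin 4 × Fin 4)) := by decide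
  have h1 : ∑ σ : Equiv.Perm (Fin 4), G (σ 0) (σ 1) (σ 2) (σ 3) =
      ∑ t ∈ (Finset.univ : Finset (Equiv.Perm (Fin 4))).image
        (fun σ => (σ 0, σ 1, σ 2, σ 3)), G t.1 t.2.1 t.2.2.1 t.2.2.2 := by
    rw [Finset.sum_image hinj]
  rw [h1, himg]
  repeat rw [Finset.sum_insert (by decide)]
  rw [Finset.sum_singleton]
  ring

lemma sum_swap_in (f : Fin m → Fin m → Fin m → ℝ) :
    ∑ x, ∑ a, ∑ b, f x a b = ∑ a, ∑ b, ∑ x, f x a b := by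
  rw [Finset.sum_comm]
  exact Finset.sum_congr rfl fun a _ => Finset.sum_comm

lemma reorder1 (f : Fin m → Fin m → Fin m → Fin m → ℝ) :
    ∑ i, ∑ k, ∑ a, ∑ b, f i k a b = ∑ a, ∑ b, ∑ i, ∑ k, f i k a b := by
  calc ∑ i, ∑ k, ∑ a, ∑ b, f i k a b
      = ∑ i, ∑ a, ∑ b, ∑ k, f i k a b :=
        Finset.sum_congr rfl fun i _ => sum_swap_in _
    _ = ∑ a, ∑ b, ∑ i, ∑ k, f i k a b := sum_swap_in _

lemma reorder2 (f : Fin m → Fin m → Fin m → Fin m → ℝ) :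
    ∑ i, ∑ k, ∑ a, ∑ b, f i k a b = ∑ a, ∑ i, ∑ k, ∑ b, f i k a b := by
  calc ∑ i, ∑ k, ∑ a, ∑ b, f i k a b
      = ∑ i, ∑ a, ∑ k, ∑ b, f i k a b :=
        Finset.sum_congr rfl fun i _ => Finset.sum_comm
    _ = ∑ a, ∑ i, ∑ k, ∑ b, f i k a b := Finset.sum_comm

lemma swap_two (f : Fin m → Fin m → ℝ) :
    ∑ i, ∑ k, f i k = ∑ i, ∑ k, f k i := Finset.sum_comm

end helpers

namespace RiemannModel
variable {m : ℕ} {M : Type} (V : RiemannModel m M)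

lemma ric_contr (p : M) (a b : Fin m) : ∑ i, V.R p a i i b = V.ric p b a :=
  Finset.sum_congr rfl fun i _ => (V.R_pairSymm p a i i b).symm

lemma QC0 (p : M) :
    ∑ i, ∑ k, V.Q p i i k k = ∑ a, ∑ b, V.ric p b a * V.ric p a b := by
  simp only [Q]
  rw [reorder1 (fun i k a b => V.R p a i i b * V.R p b k k a)]
  refine Finset.sum_congr rfl fun a _ => Finset.sum_congr rfl fun b _ => ?_
  rw [← V.ric_contr p a b, ← V.ric_contr p b a, Finset.sum_mul_sum]

lemma QC2 (p : M) : ∑ i, ∑ k, V.Q p i k k i = V.normR2 p := by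
  simp only [Q]
  rw [reorder2 (fun i k a b => V.R p a i k b * V.R p b k i a)]
  unfold normR2
  refine Finset.sum_congr rfl fun a _ => Finset.sum_congr rfl fun i _ =>
    Finset.sum_congr rfl fun k _ => Finset.sum_congr rfl fun b _ => ?_
  have h : V.R p b k i a = V.R p a i k b := by
    rw [show V.R p b k i a = V.R p i a b k from V.R_pairSymm p i a b k,
      V.R_antisymm₁ p a i b k, V.R_antisymm₂ p a i k b]
    ring
  rw [h]; ring

lemma Tlemma (p : M) :
    ∑ a, ∑ b, ∑ c, ∑ d, V.R p a b c d * V.R p a c b d = V.normR2 p / 2 := by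
  set T := ∑ a, ∑ b, ∑ c, ∑ d, V.R p a b c d * V.R p a c b d with hT
  set W := ∑ a, ∑ b, ∑ c, ∑ d, V.R p a b c d * V.R p c b a d with hW
  have bian : ∀ a b c d, V.R p a c b d = V.R p a b c d - V.R p c b a d := by
    intro a b c d
    have h := V.R_bianchi₁ p a c b d
    have h2 := V.R_antisymm₁ p a b c d
    linarith [h, h2]
  have W_eq : W = T := by
    have step1 : ∀ a b c d : Fin m, V.R p c b a d = - V.R p a d b c := by
      intro a b c d
      rw [show V.R p c b a d = V.R p a d c b from V.R_pairSymm p a d c b,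
        V.R_antisymm₂ p a d b c]
    rw [hW, hT]
    calc ∑ a, ∑ b, ∑ c, ∑ d, V.R p a b c d * V.R p c b a d
        = ∑ a, ∑ b, ∑ c, ∑ d, V.R p a b c d * (- V.R p a d b c) :=
          Finset.sum_congr rfl fun a _ => Finset.sum_congr rfl fun b _ =>
            Finset.sum_congr rfl fun c _ => Finset.sum_congr rfl fun d _ => by
              rw [step1 a b c d]
      _ = ∑ a, ∑ b, ∑ c, ∑ d, V.R p a b d c * (- V.R p a c b d) := by
          refine Finset.sum_congr rfl fun a _ => Finset.sum_congr rfl fun b _ => ?_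
          exact Finset.sum_comm
      _ = ∑ a, ∑ b, ∑ c, ∑ d, V.R p a b c d * V.R p a c b d := by
          refine Finset.sum_congr rfl fun a _ => Finset.sum_congr rfl fun b _ =>
            Finset.sum_congr rfl fun c _ => Finset.sum_congr rfl fun d _ => ?_
          rw [V.R_antisymm₂ p a b c d]
          ring
  have key : T = V.normR2 p - W := by
    rw [hT, hW]
    calc ∑ a, ∑ b, ∑ c, ∑ d, V.R p a b c d * V.R p a c b d
        = ∑ a, ∑ b, ∑ c, ∑ d,
            ((V.R p a b c d) ^ 2 - V.R p a b c d * V.R p c b a d) :=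
          Finset.sum_congr rfl fun a _ => Finset.sum_congr rfl fun b _ =>
            Finset.sum_congr rfl fun c _ => Finset.sum_congr rfl fun d _ => by
              rw [bian a b c d]; ring
      _ = (∑ a, ∑ b, ∑ c, ∑ d, (V.R p a b c d) ^ 2) -
            ∑ a, ∑ b, ∑ c, ∑ d, V.R p a b c d * V.R p c b a d := by
          simp only [Finset.sum_sub_distrib]
      _ = V.normR2 p - ∑ a, ∑ b, ∑ c, ∑ d, V.R p a b c d * V.R p c b a d := rfl
  rw [W_eq] at key
  linarith [key]

lemma QC1 (p : M) : ∑ i, ∑ k, V.Q p i k i k = V.normR2 p / 2 := by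
  simp only [Q]
  rw [reorder2 (fun i k a b => V.R p a i k b * V.R p b i k a)]
  have key : (∑ a, ∑ i, ∑ k, ∑ b, V.R p a i k b * V.R p b i k a) =
      ∑ a, ∑ b, ∑ c, ∑ d, V.R p a b c d * V.R p a c b d := by
    refine Finset.sum_congr rfl fun a _ => Finset.sum_congr rfl fun i _ =>
      Finset.sum_congr rfl fun k _ => Finset.sum_congr rfl fun b _ => ?_
    have h : V.R p b i k a = V.R p a k i b := by
      rw [V.R_antisymm₁ p i b k a, V.R_antisymm₂ p i b a k,
        show V.R p i b a k = V.R p a k i b from V.R_pairSymm p a k i b]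
      ring
    rw [h]
  rw [key]
  exact V.Tlemma p

end RiemannModel
namespace RiemannModel
variable {m : ℕ} {M : Type} (V : RiemannModel m M)

lemma symQ_eval (p : M) (i k : Fin m) : V.symQ p i i k k =
    4 * V.Q p i i k k + 4 * V.Q p i k i k + 4 * V.Q p i k k i
    + 4 * V.Q p k i i k + 4 * V.Q p k i k i + 4 * V.Q p k k i i := by
  unfold symQ
  rw [sum_perm_four (fun a b c d =>
    V.Q p (![i,i,k,k] a) (![i,i,k,k] b) (![i,i,k,k] c) (![i,i,k,k] d))]
  norm_num [Matrix.cons_val_zero, Matrix.cons_val_one, Matrix.head_cons, Matrix.cons_val_two,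
    Matrix.cons_val_three, Matrix.tail_cons]
  ring

lemma symG2_eval (i k : Fin m) : symG2 i i k k =
    4 * (kd i i * kd k k) + 4 * (kd i k * kd i k) + 4 * (kd i k * kd k i)
    + 4 * (kd k i * kd i k) + 4 * (kd k i * kd k i) + 4 * (kd k k * kd i i) := by
  unfold symG2
  rw [sum_perm_four (fun a b c d =>
    kd (![i,i,k,k] a) (![i,i,k,k] b) * kd (![i,i,k,k] c) (![i,i,k,k] d))]
  norm_num [Matrix.cons_val_zero, Matrix.cons_val_one, Matrix.head_cons, Matrix.cons_val_two,
    Matrix.cons_val_three, Matrix.tail_cons]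
  ring

end RiemannModel
section kdsums
variable {m : ℕ}

lemma kd_sum1 : ∑ i : Fin m, ∑ k : Fin m, kd i i * kd k k = (m : ℝ) * m := by
  simp [kd, Finset.sum_const, Finset.card_univ, mul_comm]

lemma kd_sum2 : ∑ i : Fin m, ∑ k : Fin m, kd i k * kd i k = (m : ℝ) := by
  have h : ∀ i : Fin m, ∑ k : Fin m, kd i k * kd i k = 1 := by
    intro i
    rw [Finset.sum_eq_single_of_mem i (Finset.mem_univ i)]
    · simp [kd]
    · intro b _ hb
      simp [kd, Ne.symm hb, hb]
  simp [h]

lemma kd_sum3 : ∑ i : Fin m, ∑ k : Fin m, kd i k * kd k i = (m : ℝ) := by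
  have h : ∀ i : Fin m, ∑ k : Fin m, kd i k * kd k i = 1 := by
    intro i
    rw [Finset.sum_eq_single_of_mem i (Finset.mem_univ i)]
    · simp [kd]
    · intro b _ hb
      simp [kd, Ne.symm hb, hb]
  simp [h]

lemma kd_ric_sum (Λ : ℝ) :
    ∑ a : Fin m, ∑ b : Fin m, (Λ * kd b a) * (Λ * kd a b) = Λ ^ 2 * m := by
  have h : ∀ a : Fin m, ∑ b : Fin m, (Λ * kd b a) * (Λ * kd a b) = Λ ^ 2 := by
    intro a
    rw [Finset.sum_eq_single_of_mem a (Finset.mem_univ a)]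
    · simp [kd]; ring
    · intro b _ hb
      simp [kd, Ne.symm hb, hb]
  calc ∑ a : Fin m, ∑ b : Fin m, (Λ * kd b a) * (Λ * kd a b)
      = ∑ _a : Fin m, Λ ^ 2 := Finset.sum_congr rfl fun a _ => h a
    _ = Λ ^ 2 * m := by simp [Finset.sum_const, Finset.card_univ, mul_comm]

end kdsums
/-- under `H₁` and `H₂`,
`Λ₂ = (1/(2m(m+2)))(2τ²/m + 3|R|²)`. -/
theorem lambda2_formula {m : ℕ} (hm : 0 < m) {M : Type}
    (V : RiemannModel m M) (Λ₁ Λ₂ : ℝ)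
    (h1 : ∀ p i j, V.ric p i j = Λ₁ * kd i j)
    (h2 : ∀ p i j k l, V.symQ p i j k l = Λ₂ * RiemannModel.symG2 i j k l) :
    ∀ p : M,
      Λ₂ = 1 / (2 * m * (m + 2)) * (2 * (V.scal p) ^ 2 / m + 3 * V.normR2 p) := by
  intro p
  have hm0 : (m : ℝ) ≠ 0 := Nat.cast_ne_zero.mpr hm.ne'
  have hscal : V.scal p = m * Λ₁ := by
    unfold RiemannModel.scal
    calc ∑ i, V.ric p i i
        = ∑ _i : Fin m, Λ₁ := Finset.sum_congr rfl fun i _ => by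
          rw [h1 p i i]; simp [kd]
      _ = m * Λ₁ := by simp [Finset.sum_const, Finset.card_univ]
  have hQ0 : ∑ i, ∑ k, V.Q p i i k k = Λ₁ ^ 2 * m := by
    rw [V.QC0 p]
    calc ∑ a, ∑ b, V.ric p b a * V.ric p a b
        = ∑ a : Fin m, ∑ b : Fin m, (Λ₁ * kd b a) * (Λ₁ * kd a b) :=
          Finset.sum_congr rfl fun a _ => Finset.sum_congr rfl fun b _ => by
            rw [h1 p b a, h1 p a b]
      _ = Λ₁ ^ 2 * m := kd_ric_sum Λ₁
  have hE1 : ∑ i, ∑ k, V.symQ p i i k k = 8 * (Λ₁ ^ 2 * m) + 12 * V.normR2 p := by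
    calc ∑ i, ∑ k, V.symQ p i i k k
        = ∑ i, ∑ k, (4 * V.Q p i i k k + 4 * V.Q p i k i k + 4 * V.Q p i k k i
            + 4 * V.Q p k i i k + 4 * V.Q p k i k i + 4 * V.Q p k k i i) :=
          Finset.sum_congr rfl fun i _ => Finset.sum_congr rfl fun k _ =>
            V.symQ_eval p i k
      _ = 4 * (∑ i, ∑ k, V.Q p i i k k) + 4 * (∑ i, ∑ k, V.Q p i k i k)
          + 4 * (∑ i, ∑ k, V.Q p i k k i) + 4 * (∑ i, ∑ k, V.Q p k i i k)
          + 4 * (∑ i, ∑ k, V.Q p k i k i) + 4 * (∑ i, ∑ k, V.Q p k k i i) := by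
          simp only [Finset.sum_add_distrib, ← Finset.mul_sum]
      _ = 8 * (Λ₁ ^ 2 * m) + 12 * V.normR2 p := by
          rw [show (∑ i, ∑ k, V.Q p k i i k) = ∑ i, ∑ k, V.Q p i k k i from
              swap_two (fun i k => V.Q p k i i k),
            show (∑ i, ∑ k, V.Q p k i k i) = ∑ i, ∑ k, V.Q p i k i k from
              swap_two (fun i k => V.Q p k i k i),
            show (∑ i, ∑ k, V.Q p k k i i) = ∑ i, ∑ k, V.Q p i i k k from
              swap_two (fun i k => V.Q p k k i i),
            hQ0, V.QC1 p, V.QC2 p]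
          ring
  have hG : ∑ i : Fin m, ∑ k : Fin m, RiemannModel.symG2 i i k k
      = 8 * (m : ℝ) ^ 2 + 16 * m := by
    calc ∑ i : Fin m, ∑ k : Fin m, RiemannModel.symG2 i i k k
        = ∑ i : Fin m, ∑ k : Fin m,
            (4 * (kd i i * kd k k) + 4 * (kd i k * kd i k) + 4 * (kd i k * kd k i)
            + 4 * (kd k i * kd i k) + 4 * (kd k i * kd k i) + 4 * (kd k k * kd i i)) :=
          Finset.sum_congr rfl fun i _ => Finset.sum_congr rfl fun k _ =>
            RiemannModel.symG2_eval i k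
      _ = 4 * (∑ i : Fin m, ∑ k : Fin m, kd i i * kd k k)
          + 4 * (∑ i : Fin m, ∑ k : Fin m, kd i k * kd i k)
          + 4 * (∑ i : Fin m, ∑ k : Fin m, kd i k * kd k i)
          + 4 * (∑ i : Fin m, ∑ k : Fin m, kd k i * kd i k)
          + 4 * (∑ i : Fin m, ∑ k : Fin m, kd k i * kd k i)
          + 4 * (∑ i : Fin m, ∑ k : Fin m, kd k k * kd i i) := by
          simp only [Finset.sum_add_distrib, ← Finset.mul_sum]
      _ = 8 * (m : ℝ) ^ 2 + 16 * m := by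
          rw [show (∑ i : Fin m, ∑ k : Fin m, kd k i * kd i k)
                = ∑ i : Fin m, ∑ k : Fin m, kd i k * kd k i from
              swap_two (fun i k => kd k i * kd i k),
            show (∑ i : Fin m, ∑ k : Fin m, kd k i * kd k i)
                = ∑ i : Fin m, ∑ k : Fin m, kd i k * kd i k from
              swap_two (fun i k => kd k i * kd k i),
            show (∑ i : Fin m, ∑ k : Fin m, kd k k * kd i i)
                = ∑ i : Fin m, ∑ k : Fin m, kd i i * kd k k from
              swap_two (fun i k => kd k k * kd i i),
            kd_sum1, kd_sum2, kd_sum3]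
          ring
  have hE2 : ∑ i, ∑ k, V.symQ p i i k k = Λ₂ * (8 * (m : ℝ) ^ 2 + 16 * m) := by
    calc ∑ i, ∑ k, V.symQ p i i k k
        = ∑ i : Fin m, ∑ k : Fin m, Λ₂ * RiemannModel.symG2 i i k k :=
          Finset.sum_congr rfl fun i _ => Finset.sum_congr rfl fun k _ =>
            h2 p i i k k
      _ = Λ₂ * ∑ i : Fin m, ∑ k : Fin m, RiemannModel.symG2 i i k k := by
          simp only [← Finset.mul_sum]
      _ = Λ₂ * (8 * (m : ℝ) ^ 2 + 16 * m) := by rw [hG]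
  have key : Λ₂ * (8 * (m : ℝ) ^ 2 + 16 * m)
      = 8 * (Λ₁ ^ 2 * m) + 12 * V.normR2 p := hE2.symm.trans hE1
  have hm2 : ((m : ℝ) + 2) ≠ 0 := by positivity
  rw [hscal]
  field_simp
  linear_combination (1 / 4 : ℝ) * key
end

section
/- Let (M,g) be an m-dimensional asymptotic harmonic manifold up to order 2 (satisfying H₁ and H₂). Then R_{iabc}R_{jabc} = (|R|²/m) g_{ij}, i.e. M is super-Einstein, and |R|² is constant on M. -/
open scoped BigOperators

/-! ### Auxiliary lemmas -/

private lemma permsum_succ {n : ℕ} (f : Equiv.Perm (Fin (n+1)) → ℝ) :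
    ∑ σ : Equiv.Perm (Fin (n+1)), f σ =
      ∑ x : Fin (n+1), ∑ σ : Equiv.Perm (Fin n), f (Equiv.Perm.decomposeFin.symm (x, σ)) := by
  rw [← Fintype.sum_prod_type']
  exact Fintype.sum_equiv Equiv.Perm.decomposeFin _ _ (fun σ => by simp)

private lemma perm4_expand (g : Fin 4 → Fin 4 → Fin 4 → Fin 4 → ℝ) :
    ∑ σ : Equiv.Perm (Fin 4), g (σ 0) (σ 1) (σ 2) (σ 3) =
    g 0 1 2 3 + g 0 1 3 2 + (g 0 2 1 3 + g 0 2 3 1 + (g 0 3 2 1 + g 0 3 1 2)) +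
      (g 1 0 2 3 + g 1 0 3 2 + (g 1 2 0 3 + g 1 2 3 0 + (g 1 3 2 0 + g 1 3 0 2)) +
        (g 2 1 0 3 + g 2 1 3 0 + (g 2 0 1 3 + g 2 0 3 1 + (g 2 3 0 1 + g 2 3 1 0)) +
          (g 3 1 2 0 + g 3 1 0 2 +
            (g 3 2 1 0 + g 3 2 0 1 + (g 3 0 2 1 + g 3 0 1 2))))) := by
  simp only [show (1 : Fin 4) = (0 : Fin 3).succ from rfl,
    show (2 : Fin 4) = (1 : Fin 3).succ from rfl,
    show (3 : Fin 4) = (2 : Fin 3).succ from rfl]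
  simp only [permsum_succ, Finset.univ_unique, Finset.sum_singleton]
  simp only [Fin.sum_univ_succ, Fin.sum_univ_zero]
  simp only [Equiv.Perm.decomposeFin_symm_apply_zero, Equiv.Perm.decomposeFin_symm_apply_succ,
    show (1 : Fin 3) = (0 : Fin 2).succ from rfl, show (2 : Fin 3) = (1 : Fin 2).succ from rfl,
    show (1 : Fin 2) = (0 : Fin 1).succ from rfl]
  simp (config := { decide := true }) only [Equiv.swap_apply_def, if_true, if_false,
    show ∀ x : Fin 1, (default : Equiv.Perm (Fin 1)) x = 0 from by decide,
    show (default : Fin 1) = 0 from rfl, add_zero]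

private lemma kd_comm {m : ℕ} (i j : Fin m) : kd i j = kd j i := by
  simp only [kd]; by_cases h : i = j <;> simp [h, Ne.symm, eq_comm]

private lemma kd_self_sum {m : ℕ} : (∑ t : Fin m, kd t t) = (m : ℝ) := by
  simp [kd]

private lemma kd_sum_left {m : ℕ} (a : Fin m) (f : Fin m → ℝ) :
    (∑ t, kd a t * f t) = f a := by
  simp [kd, ite_mul, Finset.sum_ite_eq]

private lemma kd_sum_left' {m : ℕ} (a : Fin m) (f : Fin m → ℝ) :
    (∑ t, kd t a * f t) = f a := by
  simp [kd, ite_mul, Finset.sum_ite_eq']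

private lemma sum3_comm12 {m : ℕ} (f : Fin m → Fin m → Fin m → ℝ) :
    (∑ x, ∑ y, ∑ z, f x y z) = ∑ y, ∑ x, ∑ z, f x y z := Finset.sum_comm

private lemma sum3_comm23 {m : ℕ} (f : Fin m → Fin m → Fin m → ℝ) :
    (∑ x, ∑ y, ∑ z, f x y z) = ∑ x, ∑ z, ∑ y, f x y z :=
  Finset.sum_congr rfl fun _ _ => Finset.sum_comm

private lemma sum3_cyc {m : ℕ} (f : Fin m → Fin m → Fin m → ℝ) :
    (∑ x, ∑ y, ∑ z, f x y z) = ∑ y, ∑ z, ∑ x, f x y z := by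
  rw [sum3_comm12 f]
  exact Finset.sum_congr rfl fun _ _ => Finset.sum_comm

private lemma sum3_rev {m : ℕ} (f : Fin m → Fin m → Fin m → ℝ) :
    (∑ x, ∑ y, ∑ z, f x y z) = ∑ z, ∑ y, ∑ x, f x y z := by
  rw [sum3_cyc f]; exact Finset.sum_comm

namespace RiemannModel

variable {m : ℕ} {M : Type} (V : RiemannModel m M)

/-- `T_{ij} = R_{ixyz}R_{jyxz}` -/
private def Tsum (p : M) (i j : Fin m) : ℝ :=
  ∑ x, ∑ y, ∑ z, V.R p i x y z * V.R p j y x z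

/-- `U_{ij} = R_{ixyz}R_{jyzx}` -/
private def Usum (p : M) (i j : Fin m) : ℝ :=
  ∑ x, ∑ y, ∑ z, V.R p i x y z * V.R p j y z x

/-- `W_{ij} = R_{ixyz}R_{jzxy}` -/
private def Wsum (p : M) (i j : Fin m) : ℝ :=
  ∑ x, ∑ y, ∑ z, V.R p i x y z * V.R p j z x y

/-- `P_{ij} = R_{ixyz}R_{jzyx}` -/
private def Psum (p : M) (i j : Fin m) : ℝ :=
  ∑ x, ∑ y, ∑ z, V.R p i x y z * V.R p j z y x

private lemma RR2_comm (p : M) (i j : Fin m) : V.RR2 p i j = V.RR2 p j i := by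
  unfold RR2
  exact Finset.sum_congr rfl fun a _ => Finset.sum_congr rfl fun b _ =>
    Finset.sum_congr rfl fun c _ => mul_comm _ _

/-- First Bianchi rearrangement: `R_{jxyz} = -R_{jzxy} + R_{jyxz}`. -/
private lemma bianchi_aux1 (p : M) (j x y z : Fin m) :
    V.R p j x y z = - V.R p j z x y + V.R p j y x z := by
  have h := V.R_bianchi₁ p j x y z
  rw [V.R_pairSymm p j z x y, V.R_antisymm₁ p j y x z] at h
  linarith

/-- First Bianchi rearrangement: `R_{jzxy} = -R_{jyzx} - R_{jxyz}`. -/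
private lemma bianchi_aux2 (p : M) (j x y z : Fin m) :
    V.R p j z x y = - V.R p j y z x - V.R p j x y z := by
  have h := V.R_bianchi₁ p j z x y
  rw [V.R_pairSymm p j y z x] at h
  rw [V.R_antisymm₁ p j x z y, V.R_antisymm₂ p j x y z] at h
  linarith

private lemma Wsum_eq_neg_Tsum (p : M) (i j : Fin m) : V.Wsum p i j = - V.Tsum p i j := by
  unfold Wsum Tsum
  rw [sum3_comm23 (fun x y z => V.R p i x y z * V.R p j z x y)]
  rw [← Finset.sum_neg_distrib]
  refine Finset.sum_congr rfl fun x _ => ?_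
  rw [← Finset.sum_neg_distrib]
  refine Finset.sum_congr rfl fun y _ => ?_
  rw [← Finset.sum_neg_distrib]
  refine Finset.sum_congr rfl fun z _ => ?_
  rw [V.R_antisymm₂ p i x y z]
  ring

private lemma RR2_eq_two_Tsum (p : M) (i j : Fin m) :
    V.RR2 p i j = V.Tsum p i j + V.Tsum p i j := by
  have step : V.RR2 p i j = - V.Wsum p i j + V.Tsum p i j := by
    unfold RR2 Wsum Tsum
    rw [← Finset.sum_neg_distrib, ← Finset.sum_add_distrib]
    refine Finset.sum_congr rfl fun x _ => ?_
    rw [← Finset.sum_neg_distrib, ← Finset.sum_add_distrib]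
    refine Finset.sum_congr rfl fun y _ => ?_
    rw [← Finset.sum_neg_distrib, ← Finset.sum_add_distrib]
    refine Finset.sum_congr rfl fun z _ => ?_
    rw [bianchi_aux1 V p j x y z]
    ring
  rw [step, Wsum_eq_neg_Tsum]
  ring

private lemma Usum_swap_eq_Wsum (p : M) (i j : Fin m) : V.Usum p j i = V.Wsum p i j := by
  unfold Usum Wsum
  rw [sum3_cyc (fun x y z => V.R p j x y z * V.R p i y z x)]
  exact Finset.sum_congr rfl fun x _ => Finset.sum_congr rfl fun y _ =>
    Finset.sum_congr rfl fun z _ => mul_comm _ _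

private lemma Wsum_eq (p : M) (i j : Fin m) :
    V.Wsum p i j = - V.Usum p i j - V.RR2 p i j := by
  unfold Wsum Usum RR2
  rw [← Finset.sum_neg_distrib, ← Finset.sum_sub_distrib]
  refine Finset.sum_congr rfl fun x _ => ?_
  rw [← Finset.sum_neg_distrib, ← Finset.sum_sub_distrib]
  refine Finset.sum_congr rfl fun y _ => ?_
  rw [← Finset.sum_neg_distrib, ← Finset.sum_sub_distrib]
  refine Finset.sum_congr rfl fun z _ => ?_
  rw [bianchi_aux2 V p j x y z]
  ring

private lemma Psum_eq_neg_Wsum (p : M) (i j : Fin m) : V.Psum p i j = - V.Wsum p i j := by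
  unfold Psum Wsum
  rw [← Finset.sum_neg_distrib]
  refine Finset.sum_congr rfl fun x _ => ?_
  rw [← Finset.sum_neg_distrib]
  refine Finset.sum_congr rfl fun y _ => ?_
  rw [← Finset.sum_neg_distrib]
  refine Finset.sum_congr rfl fun z _ => ?_
  rw [V.R_antisymm₂ p j z x y]
  ring

private lemma Psum_add (p : M) (i j : Fin m) :
    V.Psum p i j + V.Psum p j i = V.RR2 p i j := by
  have h1 := V.Psum_eq_neg_Wsum p i j
  have h2 := V.Psum_eq_neg_Wsum p j i
  have h3 := V.Wsum_eq p i j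
  have h4 := V.Usum_swap_eq_Wsum p j i  -- Usum i j = Wsum j i
  linarith

/-! ### Evaluation of the twelve contracted arrangements of `Q` -/

section Arrangements

variable (Λ₁ : ℝ) (p : M) (hric : ∀ a b : Fin m, V.ric p a b = Λ₁ * kd a b)

/-- `∑_t R_{btta} = ρ_{ab}` -/
private lemma sum_R_ric₁ (a b : Fin m) : (∑ t, V.R p b t t a) = V.ric p a b := by
  refine Finset.sum_congr rfl fun t _ => ?_
  exact V.R_pairSymm p t a b t

/-- `∑_t R_{attb} = ρ_{ba}` -/
private lemma sum_R_ric₂ (a b : Fin m) : (∑ t, V.R p a t t b) = V.ric p b a := by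
  refine Finset.sum_congr rfl fun t _ => ?_
  exact V.R_pairSymm p t b a t

include hric in
private lemma arr_ijtt (i j : Fin m) : (∑ t, V.Q p i j t t) = Λ₁ ^ 2 * kd i j := by
  unfold Q
  rw [sum3_cyc (fun t a b => V.R p a i j b * V.R p b t t a)]
  have h1 : ∀ a b : Fin m, (∑ t, V.R p a i j b * V.R p b t t a)
      = V.R p a i j b * (Λ₁ * kd a b) := by
    intro a b
    rw [← Finset.mul_sum, sum_R_ric₁, hric]
  simp only [h1]
  have h2 : ∀ a : Fin m, (∑ b, V.R p a i j b * (Λ₁ * kd a b)) = V.R p a i j a * Λ₁ := by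
    intro a
    simp [kd, mul_ite, Finset.sum_ite_eq]
  simp only [h2]
  rw [← Finset.sum_mul]
  have : (∑ a, V.R p a i j a) = V.ric p i j := rfl
  rw [this, hric]
  ring

include hric in
private lemma arr_ttij (i j : Fin m) : (∑ t, V.Q p t t i j) = Λ₁ ^ 2 * kd i j := by
  unfold Q
  rw [sum3_cyc (fun t a b => V.R p a t t b * V.R p b i j a)]
  have h1 : ∀ a b : Fin m, (∑ t, V.R p a t t b * V.R p b i j a)
      = (Λ₁ * kd b a) * V.R p b i j a := by
    intro a b
    rw [← Finset.sum_mul, sum_R_ric₂, hric]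
  simp only [h1]
  have h2 : ∀ a : Fin m, (∑ b, (Λ₁ * kd b a) * V.R p b i j a) = Λ₁ * V.R p a i j a := by
    intro a
    simp only [mul_assoc, ← Finset.mul_sum]
    congr 1
    simp [kd, ite_mul, Finset.sum_ite_eq']
  simp only [h2]
  rw [← Finset.mul_sum]
  have : (∑ a, V.R p a i j a) = V.ric p i j := rfl
  rw [this, hric]
  ring

private lemma arr_ittj (i j : Fin m) : (∑ t, V.Q p i t t j) = V.RR2 p i j := by
  unfold Q
  have hpt : ∀ t a b : Fin m,
      V.R p a i t b * V.R p b t j a = V.R p i a t b * V.R p j a t b := by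
    intro t a b
    rw [V.R_antisymm₁ p i a t b, V.R_pairSymm p j a b t, V.R_antisymm₂ p j a t b]
    ring
  simp only [hpt]
  rw [sum3_comm12 (fun t a b => V.R p i a t b * V.R p j a t b)]
  rfl

private lemma arr_tijt (i j : Fin m) : (∑ t, V.Q p t i j t) = V.RR2 p i j := by
  unfold Q
  have hpt : ∀ t a b : Fin m,
      V.R p a t i b * V.R p b j t a = V.R p i b a t * V.R p j b a t := by
    intro t a b
    rw [V.R_pairSymm p i b a t, V.R_antisymm₁ p j b t a, V.R_antisymm₂ p j b a t]
    ring
  simp only [hpt]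
  rw [sum3_rev (fun t a b => V.R p i b a t * V.R p j b a t)]
  rfl

private lemma arr_titj (i j : Fin m) : (∑ t, V.Q p t i t j) = V.Tsum p i j := by
  unfold Q
  have hpt : ∀ t a b : Fin m,
      V.R p a t i b * V.R p b t j a = V.R p i b a t * V.R p j a b t := by
    intro t a b
    rw [V.R_pairSymm p i b a t, V.R_pairSymm p j a b t]
  simp only [hpt]
  rw [sum3_rev (fun t a b => V.R p i b a t * V.R p j a b t)]
  rfl

private lemma arr_itjt (i j : Fin m) : (∑ t, V.Q p i t j t) = V.Psum p i j := by
  unfold Q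
  have hpt : ∀ t a b : Fin m,
      V.R p a i t b * V.R p b j t a = V.R p i a t b * V.R p j b t a := by
    intro t a b
    rw [V.R_antisymm₁ p i a t b, V.R_antisymm₁ p j b t a]
    ring
  simp only [hpt]
  rw [sum3_comm12 (fun t a b => V.R p i a t b * V.R p j b t a)]
  rfl

end Arrangements

/-- The contraction of `symG2`. -/
private lemma sum_symG2 (i j : Fin m) :
    (∑ t, (symG2 i j t t : ℝ)) = (8 * (m : ℝ) + 16) * kd i j := by
  have hexp : ∀ t : Fin m, symG2 i j t t =
      kd i j * kd t t + kd i j * kd t t + (kd i t * kd j t + kd i t * kd t j +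
        (kd i t * kd t j + kd i t * kd j t)) +
      (kd j i * kd t t + kd j i * kd t t + (kd j t * kd i t + kd j t * kd t i +
        (kd j t * kd t i + kd j t * kd i t)) +
       (kd t j * kd i t + kd t j * kd t i + (kd t i * kd j t + kd t i * kd t j +
        (kd t t * kd i j + kd t t * kd j i)) +
        (kd t j * kd t i + kd t j * kd i t +
          (kd t t * kd j i + kd t t * kd i j + (kd t i * kd t j + kd t i * kd j t))))) := by
    intro t
    have := perm4_expand (fun a b c d =>
      kd (![i,j,t,t] a) (![i,j,t,t] b) * kd (![i,j,t,t] c) (![i,j,t,t] d))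
    simp only [show (![i,j,t,t] : Fin 4 → Fin m) 0 = i from rfl,
      show (![i,j,t,t] : Fin 4 → Fin m) 1 = j from rfl,
      show (![i,j,t,t] : Fin 4 → Fin m) 2 = t from rfl,
      show (![i,j,t,t] : Fin 4 → Fin m) 3 = t from rfl] at this
    exact this
  simp only [hexp]
  have e1 : (∑ t : Fin m, kd i j * kd t t) = kd i j * m := by
    rw [← Finset.mul_sum, kd_self_sum]
  have e2 : (∑ t : Fin m, kd t t * kd i j) = (m : ℝ) * kd i j := by
    rw [← Finset.sum_mul, kd_self_sum]
  have e1' : (∑ t : Fin m, kd j i * kd t t) = kd j i * m := by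
    rw [← Finset.mul_sum, kd_self_sum]
  have e2' : (∑ t : Fin m, kd t t * kd j i) = (m : ℝ) * kd j i := by
    rw [← Finset.sum_mul, kd_self_sum]
  have e3 := kd_sum_left i (fun t => kd j t)
  have e4 := kd_sum_left i (fun t => kd t j)
  have e5 := kd_sum_left' i (fun t => kd j t)
  have e6 := kd_sum_left' i (fun t => kd t j)
  have e7 := kd_sum_left j (fun t => kd i t)
  have e8 := kd_sum_left j (fun t => kd t i)
  have e9 := kd_sum_left' j (fun t => kd i t)
  have e10 := kd_sum_left' j (fun t => kd t i)
  simp only [Finset.sum_add_distrib, e1, e2, e3, e4, e5, e6, e7, e8, e9, e10, e1', e2']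
  rw [kd_comm j i]
  ring

private lemma sum_symQ (Λ₁ : ℝ) (p : M) (hric : ∀ a b : Fin m, V.ric p a b = Λ₁ * kd a b)
    (i j : Fin m) :
    (∑ t, V.symQ p i j t t) = 8 * Λ₁ ^ 2 * kd i j + 12 * V.RR2 p i j := by
  have hexp : ∀ t : Fin m, V.symQ p i j t t =
      V.Q p i j t t + V.Q p i j t t + (V.Q p i t j t + V.Q p i t t j +
        (V.Q p i t t j + V.Q p i t j t)) +
      (V.Q p j i t t + V.Q p j i t t + (V.Q p j t i t + V.Q p j t t i +
        (V.Q p j t t i + V.Q p j t i t)) +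
       (V.Q p t j i t + V.Q p t j t i + (V.Q p t i j t + V.Q p t i t j +
        (V.Q p t t i j + V.Q p t t j i)) +
        (V.Q p t j t i + V.Q p t j i t +
          (V.Q p t t j i + V.Q p t t i j + (V.Q p t i t j + V.Q p t i j t))))) := by
    intro t
    have := perm4_expand (fun a b c d =>
      V.Q p (![i,j,t,t] a) (![i,j,t,t] b) (![i,j,t,t] c) (![i,j,t,t] d))
    simp only [show (![i,j,t,t] : Fin 4 → Fin m) 0 = i from rfl,
      show (![i,j,t,t] : Fin 4 → Fin m) 1 = j from rfl,
      show (![i,j,t,t] : Fin 4 → Fin m) 2 = t from rfl,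
      show (![i,j,t,t] : Fin 4 → Fin m) 3 = t from rfl] at this
    exact this
  simp only [hexp, Finset.sum_add_distrib]
  rw [V.arr_ijtt Λ₁ p hric i j, V.arr_ijtt Λ₁ p hric j i,
    V.arr_ttij Λ₁ p hric i j, V.arr_ttij Λ₁ p hric j i,
    V.arr_itjt p i j, V.arr_itjt p j i, V.arr_ittj p i j, V.arr_ittj p j i,
    V.arr_tijt p i j, V.arr_tijt p j i, V.arr_titj p i j, V.arr_titj p j i]
  have hP := V.Psum_add p i j
  have hT1 := V.RR2_eq_two_Tsum p i j
  have hT2 := V.RR2_eq_two_Tsum p j i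
  have hrc := V.RR2_comm p i j
  rw [kd_comm j i]
  linarith

private lemma RR2_eq (Λ₁ Λ₂ : ℝ)
    (h1 : ∀ p (i j : Fin m), V.ric p i j = Λ₁ * kd i j)
    (h2 : ∀ p (i j k l : Fin m), V.symQ p i j k l = Λ₂ * symG2 i j k l)
    (p : M) (i j : Fin m) :
    V.RR2 p i j = ((8 * (m : ℝ) + 16) * Λ₂ - 8 * Λ₁ ^ 2) / 12 * kd i j := by
  have hL : (∑ t, V.symQ p i j t t) = Λ₂ * ((8 * (m : ℝ) + 16) * kd i j) := by
    calc (∑ t, V.symQ p i j t t) = ∑ t, Λ₂ * symG2 i j t t :=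
          Finset.sum_congr rfl fun t _ => h2 p i j t t
      _ = Λ₂ * ∑ t, symG2 i j t t := by rw [Finset.mul_sum]
      _ = Λ₂ * ((8 * (m : ℝ) + 16) * kd i j) := by rw [sum_symG2]
  have hR := V.sum_symQ Λ₁ p (h1 p) i j
  linear_combination (hL - hR) / 12

private lemma normR2_eq_sum (p : M) : V.normR2 p = ∑ i, V.RR2 p i i := by
  unfold normR2 RR2
  simp only [pow_two]

end RiemannModel

/-- an asymptotic harmonic manifold up to order 2 (conditions `H₁`
and `H₂`) is super-Einstein, `R_{iabc}R_{jabc} = (|R|²/m) g_{ij}`, and `|R|²`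
is constant on `M`. -/
theorem superEinstein_of_order2 {m : ℕ} (hm : 0 < m) {M : Type}
    (V : RiemannModel m M) (Λ₁ Λ₂ : ℝ)
    (h1 : ∀ p i j, V.ric p i j = Λ₁ * kd i j)
    (h2 : ∀ p i j k l, V.symQ p i j k l = Λ₂ * RiemannModel.symG2 i j k l) :
    (∀ p i j, V.RR2 p i j = V.normR2 p / m * kd i j) ∧
      (∀ p q : M, V.normR2 p = V.normR2 q) := by
  set c : ℝ := ((8 * (m : ℝ) + 16) * Λ₂ - 8 * Λ₁ ^ 2) / 12 with hc
  have hRR2 : ∀ p i j, V.RR2 p i j = c * kd i j := fun p i j =>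
    V.RR2_eq Λ₁ Λ₂ h1 h2 p i j
  have hm' : (m : ℝ) ≠ 0 := Nat.cast_ne_zero.mpr hm.ne'
  have hnorm : ∀ p, V.normR2 p = c * m := by
    intro p
    rw [V.normR2_eq_sum p]
    calc (∑ i, V.RR2 p i i) = ∑ i : Fin m, c * kd i i :=
          Finset.sum_congr rfl fun i _ => hRR2 p i i
      _ = c * ∑ i : Fin m, kd i i := by rw [Finset.mul_sum]
      _ = c * m := by rw [kd_self_sum]
  refine ⟨fun p i j => ?_, fun p q => by rw [hnorm, hnorm]⟩
  rw [hRR2, hnorm, mul_div_cancel_right₀ _ hm']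
end

section
/- Transvecting the symmetric 2-tensor identity H₂, namely g_{kl}·𝔖(R_{aijb}R_{bkla}): the full symmetrization contracted with g^{kl} equals 2(τ/m)² g_{ij} + 3 R_{iabc}R_{jabc} when ρ_{ij} = (τ/m)g_{ij}, i.e. g^{kl}[R_{aijb}R_{aklb}+R_{aijb}R_{alkb}+R_{aikb}R_{ajlb}+R_{aikb}R_{aljb}+R_{ailb}R_{akjb}+R_{ailb}R_{ajkb}] = 2(τ/m)²g_{ij} + 3R_{iabc}R_{jabc}. -/
open scoped BigOperators

/-- transvecting the symmetrized identity `𝔖(R_{aijb}R_{bkla})`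
with `g^{kl}` on an Einstein manifold gives
`2(τ/m)² g_{ij} + 3 R_{iabc}R_{jabc}`. -/
theorem transvected_H2 {m : ℕ} (hm : 0 < m) {M : Type}
    (V : RiemannModel m M)
    (heins : ∀ p i j, V.ric p i j = V.scal p / m * kd i j) :
    ∀ (p : M) (i j : Fin m),
      (∑ a, ∑ b, ∑ k,
        (V.R p a i j b * V.R p a k k b + V.R p a i j b * V.R p a k k b +
         V.R p a i k b * V.R p a j k b + V.R p a i k b * V.R p a k j b +
         V.R p a i k b * V.R p a k j b + V.R p a i k b * V.R p a j k b)) =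
      2 * (V.scal p / m) ^ 2 * kd i j + 3 * V.RR2 p i j := by
  intro p i j
  set τm := V.scal p / m with hτ
  -- contraction of the curvature tensor gives the Ricci tensor
  have sumk : ∀ a b : Fin m, (∑ k, V.R p a k k b) = τm * kd b a := by
    intro a b
    have h1 : (∑ k, V.R p a k k b) = V.ric p b a := by
      unfold RiemannModel.ric
      exact Finset.sum_congr rfl fun k _ => (V.R_pairSymm p a k k b).symm
    rw [h1, heins]
  -- Term A
  have hA : (∑ a, ∑ b, ∑ k, V.R p a i j b * V.R p a k k b) = τm ^ 2 * kd i j := by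
    have h1 : ∀ a : Fin m, (∑ b, ∑ k, V.R p a i j b * V.R p a k k b)
        = τm * V.R p a i j a := by
      intro a
      have h2 : (∑ b, ∑ k, V.R p a i j b * V.R p a k k b)
          = ∑ b, V.R p a i j b * (τm * kd b a) := by
        refine Finset.sum_congr rfl fun b _ => ?_
        rw [← Finset.mul_sum, sumk]
      rw [h2]
      simp [kd, mul_ite, Finset.sum_ite_eq', mul_comm]
    calc (∑ a, ∑ b, ∑ k, V.R p a i j b * V.R p a k k b)
        = ∑ a, τm * V.R p a i j a := Finset.sum_congr rfl fun a _ => h1 a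
      _ = τm * V.ric p i j := by rw [RiemannModel.ric, Finset.mul_sum]
      _ = τm ^ 2 * kd i j := by rw [heins]; ring
  -- Term B
  have hB : (∑ a, ∑ b, ∑ k, V.R p a i k b * V.R p a j k b) = V.RR2 p i j := by
    rw [RiemannModel.RR2]
    refine Finset.sum_congr rfl fun a _ => ?_
    rw [Finset.sum_comm]
    refine Finset.sum_congr rfl fun b _ => Finset.sum_congr rfl fun c _ => ?_
    rw [V.R_antisymm₁ p i a b c, V.R_antisymm₁ p j a b c]
    ring
  -- first Bianchi rearranged
  have hBianchi : ∀ a b c : Fin m,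
      V.R p j b a c = V.R p a b j c + V.R p j a b c := by
    intro a b c
    have h := V.R_bianchi₁ p j b a c
    have h1 := V.R_antisymm₁ p a b j c
    have h2 := V.R_antisymm₁ p j a b c
    linarith
  -- U = -T
  have hU : (∑ a : Fin m, ∑ b, ∑ c, V.R p i a b c * V.R p a b j c)
      = - ∑ a : Fin m, ∑ b, ∑ c, V.R p i a b c * V.R p j b a c := by
    have h1 : ∀ a : Fin m, (∑ b, ∑ c, V.R p i a b c * V.R p a b j c)
        = ∑ b, ∑ c, -(V.R p i a b c * V.R p j b a c) := by
      intro a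
      rw [Finset.sum_comm]
      refine Finset.sum_congr rfl fun b _ => Finset.sum_congr rfl fun c _ => ?_
      rw [V.R_antisymm₂ p i a b c, V.R_pairSymm p j b a c]
      ring
    calc (∑ a : Fin m, ∑ b, ∑ c, V.R p i a b c * V.R p a b j c)
        = ∑ a : Fin m, ∑ b, ∑ c, -(V.R p i a b c * V.R p j b a c) :=
          Finset.sum_congr rfl fun a _ => h1 a
      _ = - ∑ a : Fin m, ∑ b, ∑ c, V.R p i a b c * V.R p j b a c := by
          simp
  -- T = U + RR2
  have hTB : (∑ a : Fin m, ∑ b, ∑ c, V.R p i a b c * V.R p j b a c)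
      = (∑ a : Fin m, ∑ b, ∑ c, V.R p i a b c * V.R p a b j c) + V.RR2 p i j := by
    have h1 : ∀ a b c : Fin m, V.R p i a b c * V.R p j b a c
        = V.R p i a b c * V.R p a b j c + V.R p i a b c * V.R p j a b c := by
      intro a b c; rw [hBianchi a b c]; ring
    simp only [h1]
    rw [RiemannModel.RR2]
    simp [Finset.sum_add_distrib]
  have hT2 : 2 * (∑ a : Fin m, ∑ b, ∑ c, V.R p i a b c * V.R p j b a c)
      = V.RR2 p i j := by linarith
  -- Term C equals T
  have hC : (∑ a, ∑ b, ∑ k, V.R p a i k b * V.R p a k j b)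
      = ∑ a : Fin m, ∑ b, ∑ c, V.R p i a b c * V.R p j b a c := by
    refine Finset.sum_congr rfl fun a _ => Finset.sum_congr rfl fun b _ =>
      Finset.sum_congr rfl fun k _ => ?_
    rw [V.R_antisymm₁ p i a k b, V.R_antisymm₂ p i a b k, V.R_pairSymm p j b a k]
    ring
  -- assemble
  have split : (∑ a, ∑ b, ∑ k,
        (V.R p a i j b * V.R p a k k b + V.R p a i j b * V.R p a k k b +
         V.R p a i k b * V.R p a j k b + V.R p a i k b * V.R p a k j b +
         V.R p a i k b * V.R p a k j b + V.R p a i k b * V.R p a j k b)) =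
      2 * (∑ a, ∑ b, ∑ k, V.R p a i j b * V.R p a k k b)
      + 2 * (∑ a, ∑ b, ∑ k, V.R p a i k b * V.R p a j k b)
      + 2 * (∑ a, ∑ b, ∑ k, V.R p a i k b * V.R p a k j b) := by
    simp only [Finset.sum_add_distrib]
    ring
  rw [split, hA, hB, hC]
  linarith
end

section
/- For any Riemannian manifold, the Laplacian of the symmetric 2-tensor R_{iabc}R_{jabc} satisfies: (R_{iabc}R_{jabc})_{;kk} = 2B_{ij} + 8R̊_{ij} + 2R̂_{ij} + 4ρ_{cd}R_{iabc}R_{jabd} + 2ρ_{ic;ab}R_{jabc} + 2ρ_{jc;ab}R_{iabc} + 2ρ_{ab;ic}R_{jabc} + 2ρ_{ab;jc}R_{iabc}, where B_{ij} = R_{ibcd;a}R_{jbcd;a}, R̂_{ij} = R_{ibac}R_{jbuv}R_{acuv}, R̊_{ij} = R_{iabc}R_{jubv}R_{aucv}. -/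
open scoped BigOperators

section Reindex
variable {ι : Type*} [Fintype ι]

lemma sum_pi_succ {n : ℕ} (f : (Fin (n+1) → ι) → ℝ) :
    ∑ v : Fin (n+1) → ι, f v = ∑ x : ι, ∑ w : Fin n → ι, f (Fin.cons x w) := by
  calc ∑ v : Fin (n+1) → ι, f v
      = ∑ p : ι × (Fin n → ι), f (Fin.consEquiv (fun _ => ι) p) :=
        Fintype.sum_equiv (Fin.consEquiv (fun _ => ι)).symm _ _ (fun v => by simp [Fin.consEquiv, Fin.cons_self_tail])
    _ = ∑ x : ι, ∑ w : Fin n → ι, f (Fin.cons x w) := Fintype.sum_prod_type _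

lemma nest3 (F : ι → ι → ι → ℝ) :
    (∑ a, ∑ b, ∑ c, F a b c) = ∑ v : Fin 3 → ι, F (v 0) (v 1) (v 2) := by
  rw [sum_pi_succ]
  refine Finset.sum_congr rfl fun a _ => ?_
  rw [sum_pi_succ]
  refine Finset.sum_congr rfl fun b _ => ?_
  rw [sum_pi_succ]
  refine Finset.sum_congr rfl fun c _ => ?_
  simp [Finset.sum_const, Finset.card_univ]
  rfl

lemma nest4 (F : ι → ι → ι → ι → ℝ) :
    (∑ a, ∑ b, ∑ c, ∑ d, F a b c d) = ∑ v : Fin 4 → ι, F (v 0) (v 1) (v 2) (v 3) := by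
  rw [sum_pi_succ]
  refine Finset.sum_congr rfl fun a _ => ?_
  rw [sum_pi_succ]
  refine Finset.sum_congr rfl fun b _ => ?_
  rw [sum_pi_succ]
  refine Finset.sum_congr rfl fun c _ => ?_
  rw [sum_pi_succ]
  refine Finset.sum_congr rfl fun d _ => ?_
  simp [Finset.sum_const, Finset.card_univ]
  rfl

lemma nest5 (F : ι → ι → ι → ι → ι → ℝ) :
    (∑ a, ∑ b, ∑ c, ∑ d, ∑ e, F a b c d e) =
      ∑ v : Fin 5 → ι, F (v 0) (v 1) (v 2) (v 3) (v 4) := by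
  rw [sum_pi_succ]
  refine Finset.sum_congr rfl fun a _ => ?_
  rw [sum_pi_succ]
  refine Finset.sum_congr rfl fun b _ => ?_
  rw [sum_pi_succ]
  refine Finset.sum_congr rfl fun c _ => ?_
  rw [sum_pi_succ]
  refine Finset.sum_congr rfl fun d _ => ?_
  rw [sum_pi_succ]
  refine Finset.sum_congr rfl fun e _ => ?_
  simp [Finset.sum_const, Finset.card_univ]
  rfl

def permEquiv {n : ℕ} (σ τ : Fin n → Fin n) (hl : ∀ x, τ (σ x) = x)
    (hr : ∀ x, σ (τ x) = x) : (Fin n → ι) ≃ (Fin n → ι) where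
  toFun v := v ∘ σ
  invFun v := v ∘ τ
  left_inv v := funext fun x => congrArg v (hr x)
  right_inv v := funext fun x => congrArg v (hl x)

lemma nest3_reindex (F G : ι → ι → ι → ℝ) (σ τ : Fin 3 → Fin 3)
    (hl : ∀ x, τ (σ x) = x) (hr : ∀ x, σ (τ x) = x)
    (h : ∀ v : Fin 3 → ι, F (v (σ 0)) (v (σ 1)) (v (σ 2)) = G (v 0) (v 1) (v 2)) :
    (∑ a, ∑ b, ∑ c, F a b c) = ∑ a, ∑ b, ∑ c, G a b c := by
  rw [nest3 F, nest3 G]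
  exact (Fintype.sum_equiv (permEquiv σ τ hl hr) _ _ (fun v => (h v).symm)).symm

lemma nest4_reindex (F G : ι → ι → ι → ι → ℝ) (σ τ : Fin 4 → Fin 4)
    (hl : ∀ x, τ (σ x) = x) (hr : ∀ x, σ (τ x) = x)
    (h : ∀ v : Fin 4 → ι, F (v (σ 0)) (v (σ 1)) (v (σ 2)) (v (σ 3)) =
      G (v 0) (v 1) (v 2) (v 3)) :
    (∑ a, ∑ b, ∑ c, ∑ d, F a b c d) = ∑ a, ∑ b, ∑ c, ∑ d, G a b c d := by
  rw [nest4 F, nest4 G]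
  exact (Fintype.sum_equiv (permEquiv σ τ hl hr) _ _ (fun v => (h v).symm)).symm

lemma nest5_reindex (F G : ι → ι → ι → ι → ι → ℝ) (σ τ : Fin 5 → Fin 5)
    (hl : ∀ x, τ (σ x) = x) (hr : ∀ x, σ (τ x) = x)
    (h : ∀ v : Fin 5 → ι, F (v (σ 0)) (v (σ 1)) (v (σ 2)) (v (σ 3)) (v (σ 4)) =
      G (v 0) (v 1) (v 2) (v 3) (v 4)) :
    (∑ a, ∑ b, ∑ c, ∑ d, ∑ e, F a b c d e) =
      ∑ a, ∑ b, ∑ c, ∑ d, ∑ e, G a b c d e := by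
  rw [nest5 F, nest5 G]
  exact (Fintype.sum_equiv (permEquiv σ τ hl hr) _ _ (fun v => (h v).symm)).symm

end Reindex

section Aux

namespace RiemannModel

variable {m : ℕ} {M : Type} (V : RiemannModel m M) (p : M)

lemma R_badc (a b c d : Fin m) : V.R p b a d c = V.R p a b c d := by
  rw [V.R_antisymm₁ p a b d c, V.R_antisymm₂ p a b c d]; ring

lemma R_dcba (a b c d : Fin m) : V.R p d c b a = V.R p a b c d := by
  rw [V.R_pairSymm p b a d c]; exact V.R_badc p a b c d

lemma ric_symm (i j : Fin m) : V.ric p i j = V.ric p j i := by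
  refine Finset.sum_congr rfl fun a _ => ?_
  rw [V.R_antisymm₂ p a i a j, ← V.R_antisymm₁ p a i a j, V.R_pairSymm p i a a j]

lemma ric2_symm (i j a b : Fin m) : V.ric2 p i j a b = V.ric2 p j i a b := by
  refine Finset.sum_congr rfl fun u _ => ?_
  rw [V.d2R_antisymm₂ p u i u j a b, ← V.d2R_antisymm₁ p u i u j a b,
    V.d2R_pairSymm p i u u j a b]

lemma trace_d2R (i a b c : Fin m) :
    ∑ k, V.d2R p i a b k k c = V.ric2 p a b i c - V.ric2 p b i a c := by
  have key : ∀ k, V.d2R p i a b k k c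
      = V.d2R p k a b k i c - V.d2R p k b i k a c := by
    intro k
    have hb := V.d2R_bianchi₂ p b k i a k c
    have h1 : V.d2R p i a b k k c = V.d2R p b k i a k c :=
      V.d2R_pairSymm p b k i a k c
    have h2 : V.d2R p b k a k i c = - V.d2R p k a b k i c := by
      rw [V.d2R_pairSymm p a k b k i c, V.d2R_antisymm₁ p k a b k i c]
    have h3 : V.d2R p b k k i a c = V.d2R p k b i k a c := by
      rw [V.d2R_antisymm₁ p k b k i a c, V.d2R_antisymm₂ p k b i k a c]; ring
    linarith
  rw [Finset.sum_congr rfl fun k _ => key k, Finset.sum_sub_distrib]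
  rfl

lemma RringT_symm (i j : Fin m) : V.RringT p j i = V.RringT p i j := by
  refine nest5_reindex _ _ ![3,1,4,0,2] ![3,1,4,0,2] (by decide) (by decide) fun v => ?_
  show V.R p j (v 3) (v 1) (v 4) * V.R p i (v 0) (v 1) (v 2) * V.R p (v 3) (v 0) (v 4) (v 2)
    = V.R p i (v 0) (v 1) (v 2) * V.R p j (v 3) (v 1) (v 4) * V.R p (v 0) (v 3) (v 2) (v 4)
  rw [V.R_badc p (v 0) (v 3) (v 2) (v 4)]; ring

lemma RhatT_symm (i j : Fin m) : V.RhatT p j i = V.RhatT p i j := by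
  refine nest5_reindex _ _ ![3,1,4,0,2] ![3,1,4,0,2] (by decide) (by decide) fun v => ?_
  show V.R p j (v 1) (v 3) (v 4) * V.R p i (v 1) (v 0) (v 2) * V.R p (v 3) (v 4) (v 0) (v 2)
    = V.R p i (v 1) (v 0) (v 2) * V.R p j (v 1) (v 3) (v 4) * V.R p (v 0) (v 2) (v 3) (v 4)
  rw [V.R_pairSymm p (v 0) (v 2) (v 3) (v 4)]; ring

lemma ricTerm_symm (i j : Fin m) :
    (∑ c, ∑ d, ∑ a, ∑ b, V.ric p c d * V.R p j a b c * V.R p i a b d)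
      = ∑ c, ∑ d, ∑ a, ∑ b, V.ric p c d * V.R p i a b c * V.R p j a b d := by
  refine nest4_reindex _ _ ![1,0,2,3] ![1,0,2,3] (by decide) (by decide) fun v => ?_
  show V.ric p (v 1) (v 0) * V.R p j (v 2) (v 3) (v 1) * V.R p i (v 2) (v 3) (v 0)
    = V.ric p (v 0) (v 1) * V.R p i (v 2) (v 3) (v 0) * V.R p j (v 2) (v 3) (v 1)
  rw [V.ric_symm p (v 1) (v 0)]; ring

set_option maxHeartbeats 1000000 in
lemma Lexp (i j : Fin m) :
    (∑ k, ∑ a, ∑ b, ∑ c, V.d2R p i a b c k k * V.R p j a b c)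
    = 2 * (∑ a, ∑ b, ∑ c, V.ric2 p a b i c * V.R p j a b c)
    + 2 * (∑ a, ∑ b, ∑ c, V.ric2 p i c a b * V.R p j a b c)
    + 2 * (∑ c, ∑ d, ∑ a, ∑ b, V.ric p c d * V.R p i a b c * V.R p j a b d)
    + 4 * V.RringT p i j + V.RhatT p i j := by
  -- names for the intermediate sums
  set SG := ∑ k, ∑ a, ∑ b, ∑ c, V.d2R p i a b k c k * V.R p j a b c with hSG
  set SH := ∑ k, ∑ a, ∑ b, ∑ c, V.d2R p i a b k k c * V.R p j a b c with hSH
  set S1 := ∑ k, ∑ a, ∑ b, ∑ c, ∑ u,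
    V.R p c k i u * V.R p u a b k * V.R p j a b c with hS1
  set S2 := ∑ k, ∑ a, ∑ b, ∑ c, ∑ u,
    V.R p c k a u * V.R p i u b k * V.R p j a b c with hS2
  set S3 := ∑ k, ∑ a, ∑ b, ∑ c, ∑ u,
    V.R p c k b u * V.R p i a u k * V.R p j a b c with hS3
  set S4 := ∑ k, ∑ a, ∑ b, ∑ c, ∑ u,
    V.R p c k k u * V.R p i a b u * V.R p j a b c with hS4
  -- Step 1: second Bianchi + antisymmetry
  have h1 : (∑ k, ∑ a, ∑ b, ∑ c, V.d2R p i a b c k k * V.R p j a b c)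
      = SG - (∑ k, ∑ a, ∑ b, ∑ c, V.d2R p i a c k b k * V.R p j a b c) := by
    rw [hSG, ← Finset.sum_sub_distrib]
    refine Finset.sum_congr rfl fun k _ => ?_
    rw [← Finset.sum_sub_distrib]
    refine Finset.sum_congr rfl fun a _ => ?_
    rw [← Finset.sum_sub_distrib]
    refine Finset.sum_congr rfl fun b _ => ?_
    rw [← Finset.sum_sub_distrib]
    refine Finset.sum_congr rfl fun c _ => ?_
    have hb := V.d2R_bianchi₂ p i a b c k k
    have ha := V.d2R_antisymm₂ p i a k b c k
    linear_combination V.R p j a b c * hb - V.R p j a b c * ha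
  have h2 : (∑ k, ∑ a, ∑ b, ∑ c, V.d2R p i a c k b k * V.R p j a b c) = - SG := by
    have hre : (∑ k, ∑ a, ∑ b, ∑ c, V.d2R p i a c k b k * V.R p j a b c)
        = ∑ k, ∑ a, ∑ b, ∑ c, -(V.d2R p i a b k c k * V.R p j a b c) := by
      refine nest4_reindex _ _ ![0,1,3,2] ![0,1,3,2] (by decide) (by decide) fun v => ?_
      show V.d2R p i (v 1) (v 2) (v 0) (v 3) (v 0) * V.R p j (v 1) (v 3) (v 2)
        = -(V.d2R p i (v 1) (v 2) (v 0) (v 3) (v 0) * V.R p j (v 1) (v 2) (v 3))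
      rw [V.R_antisymm₂ p j (v 1) (v 2) (v 3)]; ring
    rw [hre]
    simp only [Finset.sum_neg_distrib]
    rw [hSG]
  -- Step 2: Ricci commutation
  have h3 : SG = SH + (S1 + S2 + S3 + S4) := by
    rw [hSG, hSH, hS1, hS2, hS3, hS4]
    simp only [← Finset.sum_add_distrib]
    refine Finset.sum_congr rfl fun k _ => Finset.sum_congr rfl fun a _ =>
      Finset.sum_congr rfl fun b _ => Finset.sum_congr rfl fun c _ => ?_
    have hc := V.ricci_comm p i a b k c k
    have : V.d2R p i a b k c k = V.d2R p i a b k k c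
        + ∑ u, (V.R p c k i u * V.R p u a b k + V.R p c k a u * V.R p i u b k +
            V.R p c k b u * V.R p i a u k + V.R p c k k u * V.R p i a b u) := by
      linarith
    rw [this, add_mul, Finset.sum_mul]
    simp only [add_mul, Finset.sum_add_distrib]
  -- Step 3: contracted second Bianchi
  have h4 : SH = (∑ a, ∑ b, ∑ c, V.ric2 p a b i c * V.R p j a b c)
      + (∑ a, ∑ b, ∑ c, V.ric2 p i c a b * V.R p j a b c) := by
    have hre : SH = ∑ a, ∑ b, ∑ c, ∑ k, V.d2R p i a b k k c * V.R p j a b c := by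
      rw [hSH]
      exact nest4_reindex _ _ ![3,0,1,2] ![1,2,3,0] (by decide) (by decide)
        fun v => rfl
    rw [hre]
    have : ∀ a b c : Fin m, (∑ k, V.d2R p i a b k k c * V.R p j a b c)
        = V.ric2 p a b i c * V.R p j a b c - V.ric2 p b i a c * V.R p j a b c := by
      intro a b c
      rw [← Finset.sum_mul, V.trace_d2R p i a b c, sub_mul]
    simp only [this, Finset.sum_sub_distrib]
    have hfix : (∑ a, ∑ b, ∑ c, V.ric2 p b i a c * V.R p j a b c)
        = -(∑ a, ∑ b, ∑ c, V.ric2 p i c a b * V.R p j a b c) := by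
      have hre : (∑ a, ∑ b, ∑ c, V.ric2 p b i a c * V.R p j a b c)
          = ∑ a, ∑ b, ∑ c, -(V.ric2 p i c a b * V.R p j a b c) := by
        refine nest3_reindex _ _ ![0,2,1] ![0,2,1] (by decide) (by decide) fun v => ?_
        show V.ric2 p (v 2) i (v 0) (v 1) * V.R p j (v 0) (v 2) (v 1)
          = -(V.ric2 p i (v 2) (v 0) (v 1) * V.R p j (v 0) (v 1) (v 2))
        rw [V.ric2_symm p (v 2) i (v 0) (v 1), V.R_antisymm₂ p j (v 0) (v 1) (v 2)]
        ring
      rw [hre]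
      simp only [Finset.sum_neg_distrib]
    rw [hfix]; ring
  -- Step 4: the four cubic sums
  have h5 : S1 = V.RringT p i j := by
    rw [hS1]
    refine nest5_reindex _ _ ![2,3,4,1,0] ![4,3,0,1,2] (by decide) (by decide)
      fun v => ?_
    show V.R p (v 1) (v 2) i (v 0) * V.R p (v 0) (v 3) (v 4) (v 2) * V.R p j (v 3) (v 4) (v 1)
      = V.R p i (v 0) (v 1) (v 2) * V.R p j (v 3) (v 1) (v 4) * V.R p (v 0) (v 3) (v 2) (v 4)
    rw [V.R_pairSymm p i (v 0) (v 1) (v 2), V.R_antisymm₂ p (v 0) (v 3) (v 2) (v 4),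
      V.R_antisymm₂ p j (v 3) (v 1) (v 4)]
    ring
  have h6 : S2 = V.RringT p i j := by
    rw [hS2]
    refine nest5_reindex _ _ ![2,3,1,4,0] ![4,2,0,1,3] (by decide) (by decide)
      fun v => ?_
    show V.R p (v 4) (v 2) (v 3) (v 0) * V.R p i (v 0) (v 1) (v 2) * V.R p j (v 3) (v 1) (v 4)
      = V.R p i (v 0) (v 1) (v 2) * V.R p j (v 3) (v 1) (v 4) * V.R p (v 0) (v 3) (v 2) (v 4)
    rw [V.R_dcba p (v 0) (v 3) (v 2) (v 4)]; ring
  have h7 : V.RhatT p i j = S3 + S3 := by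
    rw [hS3]
    have hsplit : V.RhatT p i j
        = (∑ a, ∑ b, ∑ c, ∑ u, ∑ v,
            -(V.R p i b a c * V.R p j b u v * V.R p c u a v))
        + (∑ a, ∑ b, ∑ c, ∑ u, ∑ v,
            -(V.R p i b a c * V.R p j b u v * V.R p u a c v)) := by
      simp only [← Finset.sum_add_distrib]
      refine Finset.sum_congr rfl fun a _ => Finset.sum_congr rfl fun b _ =>
        Finset.sum_congr rfl fun c _ => Finset.sum_congr rfl fun u _ =>
        Finset.sum_congr rfl fun v _ => ?_
      have hb := V.R_bianchi₁ p a c u v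
      linear_combination (V.R p i b a c * V.R p j b u v) * hb
    have hN1 : (∑ a, ∑ b, ∑ c, ∑ u, ∑ v,
          -(V.R p i b a c * V.R p j b u v * V.R p c u a v))
        = ∑ k, ∑ a, ∑ b, ∑ c, ∑ u,
            V.R p c k b u * V.R p i a u k * V.R p j a b c := by
      refine nest5_reindex _ _ ![0,1,4,2,3] ![0,1,3,4,2] (by decide) (by decide)
        fun v => ?_
      show -(V.R p i (v 1) (v 0) (v 4) * V.R p j (v 1) (v 2) (v 3) * V.R p (v 4) (v 2) (v 0) (v 3))
        = V.R p (v 3) (v 0) (v 2) (v 4) * V.R p i (v 1) (v 4) (v 0) * V.R p j (v 1) (v 2) (v 3)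
      rw [V.R_antisymm₂ p i (v 1) (v 4) (v 0),
        show V.R p (v 4) (v 2) (v 0) (v 3) = V.R p (v 3) (v 0) (v 2) (v 4) from
          V.R_dcba p (v 3) (v 0) (v 2) (v 4)]
      ring
    have hN2 : (∑ a, ∑ b, ∑ c, ∑ u, ∑ v,
          -(V.R p i b a c * V.R p j b u v * V.R p u a c v))
        = ∑ k, ∑ a, ∑ b, ∑ c, ∑ u,
            V.R p c k b u * V.R p i a u k * V.R p j a b c := by
      refine nest5_reindex _ _ ![0,1,4,3,2] ![0,1,4,3,2] (by decide) (by decide)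
        fun v => ?_
      show -(V.R p i (v 1) (v 0) (v 4) * V.R p j (v 1) (v 3) (v 2) * V.R p (v 3) (v 0) (v 4) (v 2))
        = V.R p (v 3) (v 0) (v 2) (v 4) * V.R p i (v 1) (v 4) (v 0) * V.R p j (v 1) (v 2) (v 3)
      rw [V.R_antisymm₂ p i (v 1) (v 4) (v 0), V.R_antisymm₂ p j (v 1) (v 2) (v 3),
        V.R_antisymm₂ p (v 3) (v 0) (v 2) (v 4)]
      ring
    rw [hsplit, hN1, hN2]
  have h8 : S4 = ∑ c, ∑ d, ∑ a, ∑ b, V.ric p c d * V.R p i a b c * V.R p j a b d := by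
    have hexp : (∑ c, ∑ d, ∑ a, ∑ b, V.ric p c d * V.R p i a b c * V.R p j a b d)
        = ∑ c, ∑ d, ∑ a, ∑ b, ∑ k,
            V.R p k c d k * V.R p i a b c * V.R p j a b d := by
      refine Finset.sum_congr rfl fun c _ => Finset.sum_congr rfl fun d _ =>
        Finset.sum_congr rfl fun a _ => Finset.sum_congr rfl fun b _ => ?_
      show (∑ k, V.R p k c d k) * V.R p i a b c * V.R p j a b d = _
      rw [Finset.sum_mul, Finset.sum_mul]
    rw [hexp, hS4]
    refine nest5_reindex _ _ ![4,2,3,1,0] ![4,3,1,2,0] (by decide) (by decide)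
      fun v => ?_
    show V.R p (v 1) (v 4) (v 4) (v 0) * V.R p i (v 2) (v 3) (v 0) * V.R p j (v 2) (v 3) (v 1)
      = V.R p (v 4) (v 0) (v 1) (v 4) * V.R p i (v 2) (v 3) (v 0) * V.R p j (v 2) (v 3) (v 1)
    rw [V.R_pairSymm p (v 4) (v 0) (v 1) (v 4)]
  linarith [h1, h2, h3, h4, h5, h6, h7, h8]

end RiemannModel

end Aux

set_option maxHeartbeats 1000000 in
/-- the Laplacian identity for `R_{iabc}R_{jabc}` on any
Riemannian manifold:
`(R_{iabc}R_{jabc})_{;kk} = 2B_{ij} + 8R̊_{ij} + 2R̂_{ij} + 4ρ_{cd}R_{iabc}R_{jabd}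
 + 2ρ_{ic;ab}R_{jabc} + 2ρ_{jc;ab}R_{iabc} + 2ρ_{ab;ic}R_{jabc} + 2ρ_{ab;jc}R_{iabc}`. -/
theorem laplacian_RR2 {m : ℕ} {M : Type} (V : RiemannModel m M) :
    ∀ (p : M) (i j : Fin m),
      (∑ k, ∑ a, ∑ b, ∑ c,
        (V.d2R p i a b c k k * V.R p j a b c +
         2 * V.dR p i a b c k * V.dR p j a b c k +
         V.R p i a b c * V.d2R p j a b c k k)) =
      2 * V.Bt p i j + 8 * V.RringT p i j + 2 * V.RhatT p i j +
      4 * (∑ c, ∑ d, ∑ a, ∑ b, V.ric p c d * V.R p i a b c * V.R p j a b d) +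
      2 * (∑ a, ∑ b, ∑ c, V.ric2 p i c a b * V.R p j a b c) +
      2 * (∑ a, ∑ b, ∑ c, V.ric2 p j c a b * V.R p i a b c) +
      2 * (∑ a, ∑ b, ∑ c, V.ric2 p a b i c * V.R p j a b c) +
      2 * (∑ a, ∑ b, ∑ c, V.ric2 p a b j c * V.R p i a b c) := by
  intro p i j
  have hsplit :
      (∑ k, ∑ a, ∑ b, ∑ c,
        (V.d2R p i a b c k k * V.R p j a b c +
         2 * V.dR p i a b c k * V.dR p j a b c k +
         V.R p i a b c * V.d2R p j a b c k k))
      = (∑ k, ∑ a, ∑ b, ∑ c, V.d2R p i a b c k k * V.R p j a b c)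
      + (∑ k, ∑ a, ∑ b, ∑ c, 2 * V.dR p i a b c k * V.dR p j a b c k)
      + (∑ k, ∑ a, ∑ b, ∑ c, V.d2R p j a b c k k * V.R p i a b c) := by
    simp only [← Finset.sum_add_distrib]
    refine Finset.sum_congr rfl fun k _ => Finset.sum_congr rfl fun a _ =>
      Finset.sum_congr rfl fun b _ => Finset.sum_congr rfl fun c _ => ?_
    ring
  have hB : (∑ k, ∑ a, ∑ b, ∑ c, 2 * V.dR p i a b c k * V.dR p j a b c k)
      = 2 * V.Bt p i j := by
    rw [RiemannModel.Bt, Finset.mul_sum]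
    refine Finset.sum_congr rfl fun k _ => ?_
    rw [Finset.mul_sum]
    refine Finset.sum_congr rfl fun a _ => ?_
    rw [Finset.mul_sum]
    refine Finset.sum_congr rfl fun b _ => ?_
    rw [Finset.mul_sum]
    refine Finset.sum_congr rfl fun c _ => ?_
    ring
  rw [hsplit, hB, V.Lexp p i j, V.Lexp p j i, V.RringT_symm p i j, V.RhatT_symm p i j,
    V.ricTerm_symm p i j]
  ring
end

section
/- Let R be the algebraic curvature tensor on ℝ⁵ given in the Nikolayevsky basis by the components determined by parameters μ,ν (R₁₂₁₂=R₁₃₁₃=R₂₃₂₃=R₂₄₂₄=R₃₄₃₄=μ−ν, R₁₄₁₄=μ−4ν, R₁₅₁₅=R₄₅₄₅=μ, R₂₅₂₅=R₃₅₃₅=μ−3ν, R₁₂₃₄=ν, R₁₂₃₅=√3ν, R₁₃₂₄=−ν, R₁₃₂₅=√3ν, R₁₄₂₃=−2ν, R₂₄₂₅=√3ν, R₃₄₃₅=−√3ν, all others zero up to symmetry). Then τ = −20μ + 30ν and R_{iabc}R_{jabc} = (8μ² − 24μν + 60ν²)δ_{ij}, hence |R|² = 40μ² − 120μν + 300ν².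 -/
open scoped BigOperators

namespace Alg

variable {n : ℕ}

/-- Ricci tensor `ρ_{ij} = R_{aija}` of an algebraic curvature tensor. -/
def ric (T : Fin n → Fin n → Fin n → Fin n → ℝ) (i j : Fin n) : ℝ :=
  ∑ a, T a i j a

/-- Scalar curvature (double trace). -/
def scal (T : Fin n → Fin n → Fin n → Fin n → ℝ) : ℝ := ∑ i, ric T i i

/-- `|R|² = Σ R_{abcd}²`. -/
def normSq (T : Fin n → Fin n → Fin n → Fin n → ℝ) : ℝ :=
  ∑ a, ∑ b, ∑ c, ∑ d, (T a b c d) ^ 2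

/-- `R_{iabc}R_{jabc}`. -/
def RR2 (T : Fin n → Fin n → Fin n → Fin n → ℝ) (i j : Fin n) : ℝ :=
  ∑ a, ∑ b, ∑ c, T i a b c * T j a b c

/-- `R̂ = R_{abcd}R_{abuv}R_{cduv}`. -/
def Rhat (T : Fin n → Fin n → Fin n → Fin n → ℝ) : ℝ :=
  ∑ a, ∑ b, ∑ c, ∑ d, ∑ u, ∑ v, T a b c d * T a b u v * T c d u v

/-- `R̊ = R_{abcd}R_{aucv}R_{budv}`. -/
def Rring (T : Fin n → Fin n → Fin n → Fin n → ℝ) : ℝ :=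
  ∑ a, ∑ b, ∑ c, ∑ d, ∑ u, ∑ v, T a b c d * T a u c v * T b u d v

/-- `R̂_{ij} = R_{ibac}R_{jbuv}R_{acuv}`. -/
def RhatT (T : Fin n → Fin n → Fin n → Fin n → ℝ) (i j : Fin n) : ℝ :=
  ∑ a, ∑ b, ∑ c, ∑ u, ∑ v, T i b a c * T j b u v * T a c u v

/-- `R̊_{ij} = R_{iabc}R_{jubv}R_{aucv}`. -/
def RringT (T : Fin n → Fin n → Fin n → Fin n → ℝ) (i j : Fin n) : ℝ :=
  ∑ a, ∑ b, ∑ c, ∑ u, ∑ v, T i a b c * T j u b v * T a u c v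

end Alg

/-- Elementary antisymmetric 2-tensor `(e^p ∧ e^q)_{ij}`. -/
def E2 {n : ℕ} (p q i j : Fin n) : ℝ := kd p i * kd q j - kd q i * kd p j

/-- The Nikolayevsky algebraic curvature tensor on `ℝ⁵` with parameters `μ,ν`:
`R₁₂₁₂=R₁₃₁₃=R₂₃₂₃=R₂₄₂₄=R₃₄₃₄=μ−ν`, `R₁₄₁₄=μ−4ν`, `R₁₅₁₅=R₄₅₄₅=μ`,
`R₂₅₂₅=R₃₅₃₅=μ−3ν`, `R₁₂₃₄=ν`, `R₁₂₃₅=√3ν`, `R₁₃₂₄=−ν`, `R₁₃₂₅=√3ν`,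
`R₁₄₂₃=−2ν`, `R₂₄₂₅=√3ν`, `R₃₄₃₅=−√3ν`, all other components vanishing up to
the curvature symmetries. -/
noncomputable def nikR (μ ν : ℝ) (i j k l : Fin 5) : ℝ :=
  (μ - ν) * (E2 0 1 i j * E2 0 1 k l + E2 0 2 i j * E2 0 2 k l +
    E2 1 2 i j * E2 1 2 k l + E2 1 3 i j * E2 1 3 k l + E2 2 3 i j * E2 2 3 k l) +
  (μ - 4 * ν) * (E2 0 3 i j * E2 0 3 k l) +
  μ * (E2 0 4 i j * E2 0 4 k l + E2 3 4 i j * E2 3 4 k l) +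
  (μ - 3 * ν) * (E2 1 4 i j * E2 1 4 k l + E2 2 4 i j * E2 2 4 k l) +
  ν * (E2 0 1 i j * E2 2 3 k l + E2 2 3 i j * E2 0 1 k l) +
  Real.sqrt 3 * ν * (E2 0 1 i j * E2 2 4 k l + E2 2 4 i j * E2 0 1 k l) +
  (-ν) * (E2 0 2 i j * E2 1 3 k l + E2 1 3 i j * E2 0 2 k l) +
  Real.sqrt 3 * ν * (E2 0 2 i j * E2 1 4 k l + E2 1 4 i j * E2 0 2 k l) +
  (-2 * ν) * (E2 0 3 i j * E2 1 2 k l + E2 1 2 i j * E2 0 3 k l) +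
  Real.sqrt 3 * ν * (E2 1 3 i j * E2 1 4 k l + E2 1 4 i j * E2 1 3 k l) +
  (- (Real.sqrt 3 * ν)) * (E2 2 3 i j * E2 2 4 k l + E2 2 4 i j * E2 2 3 k l)
def nikR' (μ ν s : ℝ) (i j k l : Fin 5) : ℝ :=
  (μ - ν) * (E2 0 1 i j * E2 0 1 k l + E2 0 2 i j * E2 0 2 k l +
    E2 1 2 i j * E2 1 2 k l + E2 1 3 i j * E2 1 3 k l + E2 2 3 i j * E2 2 3 k l) +
  (μ - 4 * ν) * (E2 0 3 i j * E2 0 3 k l) +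
  μ * (E2 0 4 i j * E2 0 4 k l + E2 3 4 i j * E2 3 4 k l) +
  (μ - 3 * ν) * (E2 1 4 i j * E2 1 4 k l + E2 2 4 i j * E2 2 4 k l) +
  ν * (E2 0 1 i j * E2 2 3 k l + E2 2 3 i j * E2 0 1 k l) +
  s * ν * (E2 0 1 i j * E2 2 4 k l + E2 2 4 i j * E2 0 1 k l) +
  (-ν) * (E2 0 2 i j * E2 1 3 k l + E2 1 3 i j * E2 0 2 k l) +
  s * ν * (E2 0 2 i j * E2 1 4 k l + E2 1 4 i j * E2 0 2 k l) +
  (-2 * ν) * (E2 0 3 i j * E2 1 2 k l + E2 1 2 i j * E2 0 3 k l) +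
  s * ν * (E2 1 3 i j * E2 1 4 k l + E2 1 4 i j * E2 1 3 k l) +
  (- (s * ν)) * (E2 2 3 i j * E2 2 4 k l + E2 2 4 i j * E2 2 3 k l)

set_option maxHeartbeats 4000000

lemma nik_key (μ ν s : ℝ) (hs : s ^ 2 = 3) :
    Alg.scal (nikR' μ ν s) = -20 * μ + 30 * ν ∧
    (∀ i j : Fin 5,
      Alg.RR2 (nikR' μ ν s) i j = (8 * μ ^ 2 - 24 * μ * ν + 60 * ν ^ 2) * kd i j) ∧
    Alg.normSq (nikR' μ ν s) = 40 * μ ^ 2 - 120 * μ * ν + 300 * ν ^ 2 := by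
  have h2 : ∀ i j : Fin 5,
      Alg.RR2 (nikR' μ ν s) i j = (8 * μ ^ 2 - 24 * μ * ν + 60 * ν ^ 2) * kd i j := by
    intro i j
    fin_cases i <;> fin_cases j <;>
      simp [Alg.RR2, nikR', E2, kd, Fin.sum_univ_five] <;> nlinarith [hs]
  refine ⟨?_, h2, ?_⟩
  · simp [Alg.scal, Alg.ric, nikR', E2, kd, Fin.sum_univ_five]
    ring
  · have hn : Alg.normSq (nikR' μ ν s) = ∑ i : Fin 5, Alg.RR2 (nikR' μ ν s) i i := by
      simp only [Alg.normSq, Alg.RR2, pow_two]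
    rw [hn, Fin.sum_univ_five, h2, h2, h2, h2, h2]
    simp [kd]
    ring

theorem nikolayevsky_scal_RR2 (μ ν : ℝ) :
    Alg.scal (nikR μ ν) = -20 * μ + 30 * ν ∧
    (∀ i j : Fin 5,
      Alg.RR2 (nikR μ ν) i j = (8 * μ ^ 2 - 24 * μ * ν + 60 * ν ^ 2) * kd i j) ∧
    Alg.normSq (nikR μ ν) = 40 * μ ^ 2 - 120 * μ * ν + 300 * ν ^ 2 := by
  have h : nikR μ ν = nikR' μ ν (Real.sqrt 3) := rfl
  rw [h]
  exact nik_key μ ν (Real.sqrt 3) (Real.sq_sqrt (by norm_num))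
end
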